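/- Let G = (V, E) be a finite simple undirected graph and k a positive integer. Define f : 2^V → ℤ by: f(X) = −1 if the induced subgraph G[X] is a k-clique (i.e., |X| = k and every two vertices of X are adjacent); f(X) = 0 if |X| ≤ k and G[X] is not a k-clique; and f(X) = |V \ X| otherwise (i.e., if |X| > k). Then f is (2k+1)-distant submodular. -/
import Mathlib


open scoped symmDiff

/-- An integer-valued set function `f` is `k`-distant submodular if the submodular
inequality holds for every pair whose symmetric difference has size at least `k`. -/
def DistantSubmodularInt {α : Type*} [DecidableEq α] (k : ℕ) (f : Finset α → ℤ) : Prop :=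
  ∀ X Y : Finset α, k ≤ (X ∆ Y).card → f (X ∪ Y) + f (X ∩ Y) ≤ f X + f Y

theorem stmt_8 {V : Type*} [Fintype V] [DecidableEq V] (G : SimpleGraph V)
    (k : ℕ) (hk : 1 ≤ k) (f : Finset V → ℤ)
    (hf_clique : ∀ X : Finset V, G.IsNClique k X → f X = -1)
    (hf_small : ∀ X : Finset V, ¬ G.IsNClique k X → X.card ≤ k → f X = 0)
    (hf_big : ∀ X : Finset V, k < X.card → f X = (Xᶜ.card : ℤ)) :
    DistantSubmodularInt (2 * k + 1) f := by
  classical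
  have hbound : ∀ Z : Finset V, Z.card ≤ k → -1 ≤ f Z ∧ f Z ≤ 0 := by
    intro Z hZ
    by_cases h : G.IsNClique k Z
    · rw [hf_clique Z h]; norm_num
    · rw [hf_small Z h hZ]; norm_num
  intro X Y hXY
  set n := Fintype.card V with hn
  -- card identities
  have hsd : (X ∆ Y).card + (X ∩ Y).card = (X ∪ Y).card := by
    rw [symmDiff_eq_sup_sdiff_inf]
    exact Finset.card_sdiff_add_card_eq_card Finset.inter_subset_union
  have hui : (X ∪ Y).card + (X ∩ Y).card = X.card + Y.card :=
    Finset.card_union_add_card_inter X Y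
  have hXn : X.card + Xᶜ.card = n := Finset.card_add_card_compl X
  have hYn : Y.card + Yᶜ.card = n := Finset.card_add_card_compl Y
  have hUn : (X ∪ Y).card + (X ∪ Y)ᶜ.card = n := Finset.card_add_card_compl _
  have hIn : (X ∩ Y).card + (X ∩ Y)ᶜ.card = n := Finset.card_add_card_compl _
  have hu : k < (X ∪ Y).card := by omega
  rw [hf_big _ hu]
  by_cases hi : k < (X ∩ Y).card
  · have hX : k < X.card := lt_of_lt_of_le hi (Finset.card_le_card Finset.inter_subset_left)
    have hY : k < Y.card := lt_of_lt_of_le hi (Finset.card_le_card Finset.inter_subset_right)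
    rw [hf_big _ hi, hf_big X hX, hf_big Y hY]
    push_cast
    omega
  · push_neg at hi
    obtain ⟨hi1, hi2⟩ := hbound _ hi
    by_cases hX : k < X.card
    · by_cases hY : k < Y.card
      · rw [hf_big X hX, hf_big Y hY]
        have : ((X ∪ Y)ᶜ.card : ℤ) ≤ (Xᶜ.card : ℤ) + (Yᶜ.card : ℤ) := by push_cast; omega
        linarith
      · push_neg at hY
        obtain ⟨hY1, hY2⟩ := hbound Y hY
        rw [hf_big X hX]
        by_cases hsub : Y ⊆ X
        · have h1 : X ∩ Y = Y := Finset.inter_eq_right.mpr hsub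
          have h2 : X ∪ Y = X := Finset.union_eq_left.mpr hsub
          rw [h1, h2]
        · have hlt : X.card < (X ∪ Y).card := by
            refine Finset.card_lt_card ⟨Finset.subset_union_left, fun h => hsub ?_⟩
            exact fun v hv => h (Finset.mem_union_right X hv)
          have : ((X ∪ Y)ᶜ.card : ℤ) + 1 ≤ (Xᶜ.card : ℤ) := by push_cast; omega
          linarith
    · push_neg at hX
      obtain ⟨hX1, hX2⟩ := hbound X hX
      by_cases hY : k < Y.card
      · rw [hf_big Y hY]
        by_cases hsub : X ⊆ Y
        · have h1 : X ∩ Y = X := Finset.inter_eq_left.mpr hsub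
          have h2 : X ∪ Y = Y := Finset.union_eq_right.mpr hsub
          rw [h1, h2]
          linarith
        · have hlt : Y.card < (X ∪ Y).card := by
            refine Finset.card_lt_card ⟨Finset.subset_union_right, fun h => hsub ?_⟩
            exact fun v hv => h (Finset.mem_union_left Y hv)
          have : ((X ∪ Y)ᶜ.card : ℤ) + 1 ≤ (Yᶜ.card : ℤ) := by push_cast; omega
          linarith
      · push_neg at hY
        omega
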